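/- Every rational number y admits a unique expression as a negative continued fraction y = a_0 − 1/(a_1 − 1/(⋯ − 1/a_n)) where the a_i are integers with a_i ≥ 2 for i ≥ 1. -/

import Mathlib

/-- Value of the negative continued fraction `[a; l] = a − 1/(l₀ − 1/(l₁ − ⋯))`. -/
def ncfVal : ℤ → List ℤ → ℚ
  | a, [] => (a : ℚ)
  | a, b :: l => (a : ℚ) - 1 / ncfVal b l

lemma ncfVal_gt_one : ∀ (l : List ℤ) (b : ℤ), 2 ≤ b → (∀ x ∈ l, 2 ≤ x) → 1 < ncfVal b l
  | [], b, hb, _ => by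
    simp only [ncfVal]
    exact_mod_cast lt_of_lt_of_le one_lt_two hb
  | c :: l, b, hb, hl => by
    have hc : 2 ≤ c := hl c (by simp)
    have h := ncfVal_gt_one l c hc (fun x hx => hl x (by simp [hx]))
    have hpos : 0 < ncfVal c l := lt_trans one_pos h
    have h1 : 1 / ncfVal c l < 1 := by
      rw [div_lt_one hpos]; exact h
    have h2 : (2 : ℚ) ≤ (b : ℚ) := by exact_mod_cast hb
    simp only [ncfVal]
    linarith

lemma ncfVal_le (a : ℤ) (l : List ℤ) (hl : ∀ x ∈ l, 2 ≤ x) :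
    (a : ℚ) - 1 < ncfVal a l ∧ ncfVal a l ≤ (a : ℚ) ∧ (l ≠ [] → ncfVal a l < (a : ℚ)) := by
  cases l with
  | nil => simp [ncfVal]
  | cons c l =>
    have hc : 2 ≤ c := hl c (by simp)
    have h := ncfVal_gt_one l c hc (fun x hx => hl x (by simp [hx]))
    have hpos : 0 < ncfVal c l := lt_trans one_pos h
    have h1 : 1 / ncfVal c l < 1 := by rw [div_lt_one hpos]; exact h
    have h0 : 0 < 1 / ncfVal c l := by positivity
    simp only [ncfVal]
    refine ⟨by linarith, by linarith, fun _ => by linarith⟩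

lemma ncfVal_ceil (a : ℤ) (l : List ℤ) (hl : ∀ x ∈ l, 2 ≤ x) : ⌈ncfVal a l⌉ = a := by
  obtain ⟨h1, h2, _⟩ := ncfVal_le a l hl
  exact Int.ceil_eq_iff.mpr ⟨h1, h2⟩

lemma ncf_unique : ∀ (l l' : List ℤ) (a a' : ℤ), (∀ x ∈ l, 2 ≤ x) → (∀ x ∈ l', 2 ≤ x) →
    ncfVal a l = ncfVal a' l' → a = a' ∧ l = l' := by
  intro l
  induction l with
  | nil =>
    intro l' a a' _ hl' hv
    have ha : a = a' := by
      rw [← ncfVal_ceil a [] (by simp), ← ncfVal_ceil a' l' hl', hv]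
    refine ⟨ha, ?_⟩
    by_contra hne
    have hne' : l' ≠ [] := fun h => hne h.symm
    have := (ncfVal_le a' l' hl').2.2 hne'
    rw [← hv] at this
    simp only [ncfVal, ha] at this
    exact absurd this (lt_irrefl _)
  | cons b m ih =>
    intro l' a a' hl hl' hv
    cases l' with
    | nil =>
      have ha : a = a' := by
        rw [← ncfVal_ceil a (b :: m) hl, ← ncfVal_ceil a' [] (by simp), hv]
      have := (ncfVal_le a (b :: m) hl).2.2 (by simp)
      rw [hv] at this
      simp only [ncfVal, ha] at this
      exact absurd this (lt_irrefl _)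
    | cons b' m' =>
      have ha : a = a' := by
        rw [← ncfVal_ceil a (b :: m) hl, ← ncfVal_ceil a' (b' :: m') hl', hv]
      have hb : 2 ≤ b := hl b (by simp)
      have hb' : 2 ≤ b' := hl' b' (by simp)
      have hm : ∀ x ∈ m, 2 ≤ x := fun x hx => hl x (by simp [hx])
      have hm' : ∀ x ∈ m', 2 ≤ x := fun x hx => hl' x (by simp [hx])
      have h1 := ncfVal_gt_one m b hb hm
      have h1' := ncfVal_gt_one m' b' hb' hm'
      have hvv : ncfVal b m = ncfVal b' m' := by
        simp only [ncfVal, ha] at hv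
        have : 1 / ncfVal b m = 1 / ncfVal b' m' := by linarith
        have p1 : ncfVal b m ≠ 0 := ne_of_gt (lt_trans one_pos h1)
        have p2 : ncfVal b' m' ≠ 0 := ne_of_gt (lt_trans one_pos h1')
        field_simp at this
        exact this.symm
      obtain ⟨e1, e2⟩ := ih m' b b' hm hm' hvv
      exact ⟨ha, by rw [e1, e2]⟩

lemma ncf_exists : ∀ (n : ℕ) (y : ℚ), y.den = n →
    ∃ a l, (∀ x ∈ l, 2 ≤ x) ∧ ncfVal a l = y := by
  intro n
  induction n using Nat.strong_induction_on with
  | _ n ih =>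
    intro y hden
    by_cases h1 : y.den = 1
    · exact ⟨y.num, [], by simp, (Rat.den_eq_one_iff y).mp h1⟩
    · set a := ⌈y⌉ with ha
      set z := (a : ℚ) - y with hz
      have hyne : (y.num : ℚ) ≠ y := fun h => h1 ((Rat.den_eq_one_iff y).mpr h)
      have hzpos : 0 < z := by
        have hle : y ≤ (a : ℚ) := Int.le_ceil y
        rcases lt_or_eq_of_le hle with h | h
        · linarith [hz ▸ sub_pos.mpr h]
        · exfalso
          apply h1
          have : ((a : ℚ)).den = 1 := Rat.den_intCast a
          rw [h]; exact this
      have hzlt : z < 1 := by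
        have := Int.ceil_lt_add_one y
        rw [hz]; linarith
      -- z.den = y.den
      have hzden : z.den = y.den := by
        apply Nat.dvd_antisymm
        · have : z = (a : ℚ) + (-y) := by rw [hz]; ring
          have hd := this ▸ Rat.add_den_dvd (a : ℚ) (-y)
          simpa using hd
        · have : y = (a : ℚ) + (-z) := by rw [hz]; ring
          have hd := Rat.add_den_dvd (a : ℚ) (-z)
          rw [← this] at hd
          simpa using hd
      have hznum : 0 < z.num := Rat.num_pos.mpr hzpos
      have hznumlt : z.num < (z.den : ℤ) := Rat.lt_one_iff_num_lt_denom.mpr hzlt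
      set w := z⁻¹ with hw
      have hwval : w = ((z.den : ℤ) : ℚ) / (z.num : ℚ) := by
        rw [hw, Rat.inv_def, Rat.divInt_eq_div]
      have hcop : Nat.Coprime ((z.den : ℤ)).natAbs z.num.natAbs := by
        simpa using z.reduced.symm
      have hwden : (w.den : ℤ) = z.num := by
        rw [hwval]; exact Rat.den_div_eq_of_coprime hznum hcop
      have hwdenlt : w.den < n := by
        have : (w.den : ℤ) < (z.den : ℤ) := hwden ▸ hznumlt
        have h2 : w.den < z.den := by exact_mod_cast this
        rwa [hzden, hden] at h2
      obtain ⟨b, m, hbm, hval⟩ := ih w.den hwdenlt w rfl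
      have hwgt : 1 < w := by
        rw [hw]; exact (one_lt_inv₀ hzpos).mpr hzlt
      have hb2 : 2 ≤ b := by
        have := (ncfVal_le b m hbm).2.1
        rw [hval] at this
        have : (1 : ℚ) < (b : ℚ) := lt_of_lt_of_le hwgt this
        exact_mod_cast this
      refine ⟨a, b :: m, ?_, ?_⟩
      · intro x hx
        rcases List.mem_cons.mp hx with h | h
        · exact h ▸ hb2
        · exact hbm x h
      · simp only [ncfVal, hval]
        rw [hw, one_div, inv_inv, hz]
        ring

/-- Every rational number `y` admits a unique expression as a
negative continued fraction `y = a₀ − 1/(a₁ − 1/(⋯ − 1/aₙ))` where the `aᵢ`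
are integers with `aᵢ ≥ 2` for `i ≥ 1`. -/
theorem stmt6 (y : ℚ) :
    ∃! al : ℤ × List ℤ, (∀ b ∈ al.2, 2 ≤ b) ∧ ncfVal al.1 al.2 = y := by
  obtain ⟨a, l, hl, hv⟩ := ncf_exists y.den y rfl
  refine ⟨(a, l), ⟨hl, hv⟩, ?_⟩
  rintro ⟨a', l'⟩ ⟨hl', hv'⟩
  obtain ⟨h1, h2⟩ := ncf_unique l' l a' a hl' hl (by rw [hv, hv'])
  simp [h1, h2]
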